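/- Let φ_N be a solution of the N-periodic Riccati system and \hat{φ}_N^k(t) := Σ_{j=0}^{N−1} φ_N^j(t) exp(−2π√(−1) jk / N) its discrete Fourier transform. Then \hat{φ}_N^k(t) = f_t(k/N) for every k = 0,1,…,N−1 and t ∈ [0,T] (with the convention f_t(0) := 0), and consequently φ_N^j(t) = (1/N) Σ_{k=0}^{N−1} f_t(k/N) exp(2π√(−1) jk / N) for every j = 0,1,…,N−1 and t ∈ [0,T]. -/

import Mathlib

open scoped BigOperators

/-- `𝔯(x) := (2(1 − cos(2πx)))^{1/4}`. -/
noncomputable def frakr (x : ℝ) : ℝ := (2 * (1 - Real.cos (2 * Real.pi * x))) ^ ((1:ℝ)/4)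

/-- `θ(x) := (1/2) arctan( sin(2πx) / (1 − cos(2πx)) )`. -/
noncomputable def thetaCat (x : ℝ) : ℝ :=
  (1/2) * Real.arctan (Real.sin (2 * Real.pi * x) / (1 - Real.cos (2 * Real.pi * x)))

/-- The complex number `𝔯(x) e^{√(−1) θ(x)}`. -/
noncomputable def rTheta (x : ℝ) : ℂ := (frakr x : ℂ) * Complex.exp (Complex.I * (thetaCat x : ℂ))

/-- `𝔞⁺(x) := √ε + c 𝔯(x) e^{√(−1)θ(x)}`. -/
noncomputable def aPlus (ε c : ℝ) (x : ℝ) : ℂ := (Real.sqrt ε : ℂ) + (c : ℂ) * rTheta x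

/-- `𝔞⁻(x) := √ε − c 𝔯(x) e^{√(−1)θ(x)}`. -/
noncomputable def aMinus (ε c : ℝ) (x : ℝ) : ℂ := (Real.sqrt ε : ℂ) - (c : ℂ) * rTheta x

/-- `𝔢_t⁺(x) := exp( √ε 𝔯(x) e^{√(−1)θ(x)} (T−t) )`. -/
noncomputable def ePlus (T ε : ℝ) (t x : ℝ) : ℂ :=
  Complex.exp ((Real.sqrt ε : ℂ) * rTheta x * ((T : ℂ) - (t : ℂ)))

/-- `𝔢_t⁻(x) := exp( −√ε 𝔯(x) e^{√(−1)θ(x)} (T−t) )`. -/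
noncomputable def eMinus (T ε : ℝ) (t x : ℝ) : ℂ :=
  Complex.exp (-((Real.sqrt ε : ℂ) * rTheta x * ((T : ℂ) - (t : ℂ))))

/-- The Catalan generating-type function
`f_t(x) := √ε 𝔯(x) e^{√(−1)θ(x)} (𝔞⁺𝔢_t⁺ − 𝔞⁻𝔢_t⁻)/(𝔞⁺𝔢_t⁺ + 𝔞⁻𝔢_t⁻)`, for `x ∈ (0,1)`. -/
noncomputable def fCat (T ε c : ℝ) (t x : ℝ) : ℂ :=
  (Real.sqrt ε : ℂ) * rTheta x *
    ((aPlus ε c x * ePlus T ε t x - aMinus ε c x * eMinus T ε t x) /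
      (aPlus ε c x * ePlus T ε t x + aMinus ε c x * eMinus T ε t x))

/-- The extension of `f` to `[0,1]` by `f_t(0) := 0` and `f_t(1) := 0`. -/
noncomputable def fCatExt (T ε c : ℝ) (t x : ℝ) : ℂ :=
  if x = 0 ∨ x = 1 then 0 else fCat T ε c t x

/-- The sequence ε^i with integer index. -/
noncomputable def epsZ (ε : ℝ) : ℤ → ℝ := fun i => if i = 0 then ε else if i = 1 then -ε else 0

/-- `φ` is a solution of the `N`-periodic Riccati system on `[0,T]`. -/
def IsPerRiccatiSol (T ε c : ℝ) (N : ℕ) (φ : ℤ → ℝ → ℝ) : Prop :=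
  (∀ i : ℤ, φ (i + (N : ℤ)) = φ i) ∧
  (∀ i : ℕ, i < N → ∀ t ∈ Set.Icc (0:ℝ) T,
    HasDerivWithinAt (φ (i : ℤ))
      ((∑ j ∈ Finset.range N, φ (j : ℤ) t * φ ((N : ℤ) + (i : ℤ) - (j : ℤ)) t) - epsZ ε (i : ℤ))
      (Set.Icc (0:ℝ) T) t) ∧
  φ 0 T = c ∧ φ 1 T = -c ∧ ∀ i : ℕ, 2 ≤ i → i < N → φ (i : ℤ) T = 0

/-- The discrete Fourier transform of `(φ^j)_{j=0,…,N-1}` at frequency `k`: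
`\hatφ^k(t) := ∑_{j=0}^{N-1} φ^j(t) exp(−2π√(−1) jk/N)`. -/
noncomputable def dft (N : ℕ) (φ : ℤ → ℝ → ℝ) (k : ℕ) (t : ℝ) : ℂ :=
  ∑ j ∈ Finset.range N,
    (φ (j : ℤ) t : ℂ) * Complex.exp (-(2 * Real.pi * Complex.I * (j : ℂ) * (k : ℂ)) / (N : ℂ))

lemma sum_shift_one (G : ℤ → ℂ) (N : ℕ) (hG : ∀ m, G (m + N) = G m) :
    ∑ j ∈ Finset.range N, G ((j:ℤ) + 1) = ∑ j ∈ Finset.range N, G j := by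
  cases N with
  | zero => simp
  | succ M =>
    rw [Finset.sum_range_succ, Finset.sum_range_succ' (fun j => G (j:ℤ)) M]
    have h0 : G ((M:ℤ) + 1) = G 0 := by
      have := hG 0
      push_cast at this
      simpa using this
    push_cast
    rw [h0]

lemma sum_shift (N : ℕ) (a : ℕ) : ∀ (H : ℤ → ℂ), (∀ m, H (m + N) = H m) →
    ∑ j ∈ Finset.range N, H ((j:ℤ) + a) = ∑ j ∈ Finset.range N, H j := by
  induction a with
  | zero => intro H _; simp
  | succ a ih =>
    intro H hH
    have step1 : ∑ j ∈ Finset.range N, H ((j:ℤ) + (a+1:ℕ)) =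
        ∑ j ∈ Finset.range N, (fun m => H (m + 1)) ((j:ℤ) + a) := by
      refine Finset.sum_congr rfl fun j _ => ?_
      have h : ((j:ℤ) + ((a+1:ℕ):ℤ)) = ((j:ℤ) + (a:ℕ)) + 1 := by push_cast; ring
      rw [h]
    rw [step1, ih (fun m => H (m + 1)) (fun m => by simpa [add_right_comm] using hH (m+1))]
    exact sum_shift_one H N hH

lemma conv_eq_sq (N : ℕ) (u : ℤ → ℝ) (hper : ∀ i, u (i + (N:ℤ)) = u i)
    (W : ℤ → ℂ) (hWadd : ∀ a b, W (a + b) = W a * W b) (hWN : W (N:ℤ) = 1) :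
    ∑ j ∈ Finset.range N,
        ((∑ l ∈ Finset.range N, u (l:ℤ) * u ((N:ℤ) + (j:ℤ) - (l:ℤ)) : ℝ) : ℂ) * W (j:ℤ)
      = (∑ j ∈ Finset.range N, ((u (j:ℤ) : ℂ)) * W (j:ℤ))^2 := by
  have hHper : ∀ m, (fun m => ((u m : ℂ) * W m)) (m + (N:ℤ)) = (u m : ℂ) * W m := by
    intro m
    simp only [hper, hWadd, hWN, mul_one]
  calc ∑ j ∈ Finset.range N,
        ((∑ l ∈ Finset.range N, u (l:ℤ) * u ((N:ℤ) + (j:ℤ) - (l:ℤ)) : ℝ) : ℂ) * W (j:ℤ)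
      = ∑ j ∈ Finset.range N, ∑ l ∈ Finset.range N,
          ((u (l:ℤ) : ℂ) * W (l:ℤ)) * ((u ((N:ℤ)+(j:ℤ)-(l:ℤ)) : ℂ) * W ((N:ℤ)+(j:ℤ)-(l:ℤ))) := by
        refine Finset.sum_congr rfl fun j _ => ?_
        push_cast
        rw [Finset.sum_mul]
        refine Finset.sum_congr rfl fun l _ => ?_
        have hW : W (j:ℤ) = W (l:ℤ) * W ((N:ℤ)+(j:ℤ)-(l:ℤ)) := by
          calc W (j:ℤ) = W (N:ℤ) * W (j:ℤ) := by rw [hWN, one_mul]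
            _ = W ((N:ℤ) + (j:ℤ)) := (hWadd _ _).symm
            _ = W ((l:ℤ) + ((N:ℤ)+(j:ℤ)-(l:ℤ))) := by congr 1; ring
            _ = W (l:ℤ) * W ((N:ℤ)+(j:ℤ)-(l:ℤ)) := hWadd _ _
        rw [hW]
        ring
    _ = ∑ l ∈ Finset.range N, ((u (l:ℤ) : ℂ) * W (l:ℤ)) *
          ∑ j ∈ Finset.range N, ((u ((N:ℤ)+(j:ℤ)-(l:ℤ)) : ℂ) * W ((N:ℤ)+(j:ℤ)-(l:ℤ))) := by
        rw [Finset.sum_comm]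
        exact Finset.sum_congr rfl fun l _ => (Finset.mul_sum _ _ _).symm
    _ = ∑ l ∈ Finset.range N, ((u (l:ℤ) : ℂ) * W (l:ℤ)) *
          ∑ j ∈ Finset.range N, ((u (j:ℤ) : ℂ) * W (j:ℤ)) := by
        refine Finset.sum_congr rfl fun l hl => ?_
        congr 1
        have hlN : l ≤ N := le_of_lt (Finset.mem_range.mp hl)
        have harg : ∀ j : ℕ, (N:ℤ)+(j:ℤ)-(l:ℤ) = (j:ℤ) + ((N - l : ℕ) : ℤ) := by
          intro j
          rw [Nat.cast_sub hlN]
          ring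
        calc ∑ j ∈ Finset.range N, ((u ((N:ℤ)+(j:ℤ)-(l:ℤ)) : ℂ) * W ((N:ℤ)+(j:ℤ)-(l:ℤ)))
            = ∑ j ∈ Finset.range N,
                (fun m => (u m : ℂ) * W m) ((j:ℤ) + ((N - l : ℕ) : ℤ)) := by
              refine Finset.sum_congr rfl fun j _ => ?_
              rw [harg j]
          _ = ∑ j ∈ Finset.range N, ((u (j:ℤ) : ℂ) * W (j:ℤ)) := by
              simpa using sum_shift N (N - l) (fun m => (u m : ℂ) * W m) hHper
    _ = (∑ j ∈ Finset.range N, ((u (j:ℤ) : ℂ)) * W (j:ℤ))^2 := by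
        rw [← Finset.sum_mul, sq]

lemma cos_lt_one_of_mem {x : ℝ} (hx : x ∈ Set.Ioo (0:ℝ) 1) :
    Real.cos (2 * Real.pi * x) < 1 := by
  have hπ := Real.pi_pos
  have h1 : 0 < 2 * Real.pi * x := by nlinarith [hx.1]
  have h2 : 2 * Real.pi * x < 2 * Real.pi := by nlinarith [hx.2]
  rcases lt_or_ge (Real.cos (2 * Real.pi * x)) 1 with h | h
  · exact h
  · exfalso
    have heq : Real.cos (2 * Real.pi * x) = 1 := le_antisymm (Real.cos_le_one _) h
    rw [Real.cos_eq_one_iff_of_lt_of_lt (by linarith) h2] at heq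
    linarith

lemma frakr_pos {x : ℝ} (hx : x ∈ Set.Ioo (0:ℝ) 1) : 0 < frakr x :=
  Real.rpow_pos_of_pos (by nlinarith [cos_lt_one_of_mem hx]) _

lemma theta_mem {x : ℝ} : thetaCat x ∈ Set.Ioo (-(Real.pi/2)) (Real.pi/2) := by
  have h1 := Real.arctan_lt_pi_div_two (Real.sin (2 * Real.pi * x) / (1 - Real.cos (2 * Real.pi * x)))
  have h2 := Real.neg_pi_div_two_lt_arctan (Real.sin (2 * Real.pi * x) / (1 - Real.cos (2 * Real.pi * x)))
  constructor <;> (simp only [thetaCat]; nlinarith [Real.pi_pos])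

lemma cos_theta_pos (x : ℝ) : 0 < Real.cos (thetaCat x) :=
  Real.cos_pos_of_mem_Ioo theta_mem

lemma rTheta_re (x : ℝ) : (rTheta x).re = frakr x * Real.cos (thetaCat x) := by
  simp [rTheta, Complex.exp_re, Complex.exp_im]

lemma rTheta_re_pos {x : ℝ} (hx : x ∈ Set.Ioo (0:ℝ) 1) : 0 < (rTheta x).re := by
  rw [rTheta_re]
  exact mul_pos (frakr_pos hx) (cos_theta_pos x)

lemma frakr_nonneg (x : ℝ) : 0 ≤ frakr x :=
  Real.rpow_nonneg (by nlinarith [Real.cos_le_one (2 * Real.pi * x)]) _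

lemma abs_rTheta (x : ℝ) : ‖rTheta x‖ = frakr x := by
  simp [rTheta, Complex.norm_exp, abs_of_nonneg (frakr_nonneg x)]

lemma rTheta_sq {x : ℝ} (hx : x ∈ Set.Ioo (0:ℝ) 1) :
    (rTheta x)^2 = 1 - Complex.exp (-((2 * Real.pi * x : ℝ) : ℂ) * Complex.I) := by
  set α := 2 * Real.pi * x with hα
  have hcos : Real.cos α < 1 := cos_lt_one_of_mem hx
  have hy : (0:ℝ) < 2 * (1 - Real.cos α) := by nlinarith
  set z : ℂ := ((1 - Real.cos α : ℝ) : ℂ) + ((Real.sin α : ℝ) : ℂ) * Complex.I with hz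
  have hzre : z.re = 1 - Real.cos α := by
    simp [hz, Complex.cos_ofReal_re, Complex.sin_ofReal_re]
  have hzim : z.im = Real.sin α := by
    simp [hz, Complex.cos_ofReal_re, Complex.sin_ofReal_re]
  have hre_pos : 0 < z.re := by rw [hzre]; linarith
  have hz_ne : z ≠ 0 := by
    intro h
    rw [h] at hre_pos
    simp at hre_pos
  -- claim A
  have hA : 1 - Complex.exp (-((α : ℝ) : ℂ) * Complex.I) = z := by
    apply Complex.ext <;>
      simp [hz, Complex.exp_re, Complex.exp_im, Real.cos_neg, Real.sin_neg,
        Complex.cos_ofReal_re, Complex.sin_ofReal_re]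
  -- claim B
  have hB : ‖z‖ = Real.sqrt (2 * (1 - Real.cos α)) := by
    rw [Complex.norm_def]
    congr 1
    have : Complex.normSq z = (1 - Real.cos α)^2 + (Real.sin α)^2 := by
      rw [hz, Complex.normSq_add_mul_I]
    rw [this]
    nlinarith [Real.sin_sq_add_cos_sq α]
  -- claim C
  have harg_tan : Real.tan (Complex.arg z) = Real.sin α / (1 - Real.cos α) := by
    rw [Complex.tan_arg, hzre, hzim]
  have harg_mem : Complex.arg z ∈ Set.Ioo (-(Real.pi/2)) (Real.pi/2) := by
    have := Complex.abs_arg_lt_pi_div_two_iff.mpr (Or.inl hre_pos)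
    rw [abs_lt] at this
    exact ⟨this.1, this.2⟩
  have hC : Complex.arg z = 2 * thetaCat x := by
    have : Real.arctan (Real.tan (Complex.arg z)) = Complex.arg z :=
      Real.arctan_tan harg_mem.1 harg_mem.2
    rw [harg_tan] at this
    rw [← this, thetaCat]
    ring
  -- claim D
  have hr2 : (frakr x : ℝ)^2 = Real.sqrt (2 * (1 - Real.cos α)) := by
    rw [frakr, ← hα, Real.sqrt_eq_rpow, ← Real.rpow_natCast _ 2, ← Real.rpow_mul hy.le]
    norm_num
  have hD : (rTheta x)^2 = ((Real.sqrt (2 * (1 - Real.cos α)) : ℝ) : ℂ) *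
      Complex.exp (((2 * thetaCat x : ℝ) : ℂ) * Complex.I) := by
    rw [rTheta, mul_pow, ← Complex.exp_nat_mul]
    rw [← hr2]
    push_cast
    ring_nf
  rw [hD, ← hC, ← hB, Complex.norm_mul_exp_arg_mul_I z, hA]

lemma denom_ne_zero {T ε c : ℝ} (hε : 0 < ε) (hc : 0 ≤ c) {x : ℝ} (hx : x ∈ Set.Ioo (0:ℝ) 1)
    {t : ℝ} (ht : t ≤ T) :
    aPlus ε c x * ePlus T ε t x + aMinus ε c x * eMinus T ε t x ≠ 0 := by
  have hsε : 0 < Real.sqrt ε := Real.sqrt_pos.mpr hε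
  have hRre : 0 < (rTheta x).re := rTheta_re_pos hx
  rcases eq_or_lt_of_le ht with rfl | htlt
  · -- t = T
    have h1 : ePlus t ε t x = 1 := by simp [ePlus]
    have h2 : eMinus t ε t x = 1 := by simp [eMinus]
    rw [h1, h2, mul_one, mul_one]
    have : aPlus ε c x + aMinus ε c x = 2 * (Real.sqrt ε : ℂ) := by
      simp [aPlus, aMinus]; ring
    rw [this]
    simp only [ne_eq, mul_eq_zero, not_or]
    constructor
    · norm_num
    · exact_mod_cast hsε.ne'
  · -- t < T
    set lam : ℂ := (Real.sqrt ε : ℂ) * rTheta x with hlam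
    have hlre : 0 < lam.re := by
      rw [hlam]
      simp only [Complex.mul_re, Complex.ofReal_re, Complex.ofReal_im]
      simpa using mul_pos hsε hRre
    set s : ℝ := T - t with hs
    have hspos : 0 < s := by simp [hs]; linarith
    have habsP : ‖ePlus T ε t x‖ = Real.exp (lam.re * s) := by
      rw [ePlus, Complex.norm_exp]
      congr 1
      have : (Real.sqrt ε : ℂ) * rTheta x * ((T : ℂ) - (t : ℂ)) = lam * ((s:ℝ) : ℂ) := by
        rw [hlam, hs]; push_cast; ring
      rw [this]
      simp [Complex.mul_re]
    have habsM : ‖eMinus T ε t x‖ = Real.exp (-(lam.re * s)) := by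
      rw [eMinus, Complex.norm_exp]
      congr 1
      have : -((Real.sqrt ε : ℂ) * rTheta x * ((T : ℂ) - (t : ℂ))) = -(lam * ((s:ℝ) : ℂ)) := by
        rw [hlam, hs]; push_cast; ring
      rw [this]
      simp [Complex.mul_re]
    -- |aPlus| bounds
    have haPre : (aPlus ε c x).re = Real.sqrt ε + c * (rTheta x).re := by
      simp [aPlus, Complex.add_re, Complex.mul_re]
    have haP_pos : 0 < ‖aPlus ε c x‖ := by
      have h1 : (0:ℝ) < (aPlus ε c x).re := by
        rw [haPre]; positivity
      calc (0:ℝ) < (aPlus ε c x).re := h1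
        _ ≤ ‖aPlus ε c x‖ := Complex.re_le_norm _
    have haMP : ‖aMinus ε c x‖ ≤ ‖aPlus ε c x‖ := by
      have h1 : Complex.normSq (aMinus ε c x) ≤ Complex.normSq (aPlus ε c x) := by
        simp only [aPlus, aMinus, Complex.normSq_apply, Complex.add_re, Complex.add_im,
          Complex.sub_re, Complex.sub_im, Complex.mul_re, Complex.mul_im,
          Complex.ofReal_re, Complex.ofReal_im]
        nlinarith [mul_pos hsε hRre, mul_nonneg hc hRre.le, Real.sqrt_nonneg ε]
      calc ‖aMinus ε c x‖ = Real.sqrt (Complex.normSq (aMinus ε c x)) := by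
            rw [Complex.norm_def]
        _ ≤ Real.sqrt (Complex.normSq (aPlus ε c x)) := Real.sqrt_le_sqrt h1
        _ = ‖aPlus ε c x‖ := by rw [Complex.norm_def]
    -- strict inequality of magnitudes
    have hstrict : ‖aMinus ε c x * eMinus T ε t x‖
        < ‖aPlus ε c x * ePlus T ε t x‖ := by
      rw [norm_mul, norm_mul, habsP, habsM]
      have he : Real.exp (-(lam.re * s)) < Real.exp (lam.re * s) := by
        apply Real.exp_lt_exp.mpr
        nlinarith
      calc ‖aMinus ε c x‖ * Real.exp (-(lam.re * s))
          ≤ ‖aPlus ε c x‖ * Real.exp (-(lam.re * s)) := by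
            apply mul_le_mul_of_nonneg_right haMP (Real.exp_nonneg _)
        _ < ‖aPlus ε c x‖ * Real.exp (lam.re * s) := by
            exact (mul_lt_mul_iff_right₀ haP_pos).mpr he
    intro hzero
    have : aPlus ε c x * ePlus T ε t x = -(aMinus ε c x * eMinus T ε t x) := by
      linear_combination hzero
    rw [this, norm_neg] at hstrict
    exact lt_irrefl _ hstrict

lemma ePlus_hasDerivAt (T ε : ℝ) (x : ℝ) (t : ℝ) :
    HasDerivAt (fun t : ℝ => ePlus T ε t x)
      (-((Real.sqrt ε : ℂ) * rTheta x) * ePlus T ε t x) t := by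
  set lam : ℂ := (Real.sqrt ε : ℂ) * rTheta x with hlam
  have hz : HasDerivAt (fun z : ℂ => Complex.exp (lam * ((T:ℂ) - z)))
      (Complex.exp (lam * ((T:ℂ) - ((t:ℝ):ℂ))) * (lam * -1)) ((t:ℝ):ℂ) := by
    simpa using (((hasDerivAt_id ((t:ℝ):ℂ)).const_sub (T:ℂ)).const_mul lam).cexp
  have h2 := hz.comp_ofReal
  have hfn : (fun y : ℝ => Complex.exp (lam * ((T:ℂ) - ((y:ℝ):ℂ)))) =
      (fun y : ℝ => ePlus T ε y x) := by
    funext u; rw [ePlus, hlam]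
  have hval : Complex.exp (lam * ((T:ℂ) - ((t:ℝ):ℂ))) * (lam * -1) = -lam * ePlus T ε t x := by
    rw [ePlus, hlam]; ring
  rw [hfn, hval, hlam] at h2
  exact h2
lemma eMinus_hasDerivAt (T ε : ℝ) (x : ℝ) (t : ℝ) :
    HasDerivAt (fun t : ℝ => eMinus T ε t x)
      (((Real.sqrt ε : ℂ) * rTheta x) * eMinus T ε t x) t := by
  set lam : ℂ := (Real.sqrt ε : ℂ) * rTheta x with hlam
  have hz : HasDerivAt (fun z : ℂ => Complex.exp (-(lam * ((T:ℂ) - z))))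
      (Complex.exp (-(lam * ((T:ℂ) - ((t:ℝ):ℂ)))) * -(lam * -1)) ((t:ℝ):ℂ) := by
    simpa using ((((hasDerivAt_id ((t:ℝ):ℂ)).const_sub (T:ℂ)).const_mul lam).neg).cexp
  have h2 := hz.comp_ofReal
  have hfn : (fun y : ℝ => Complex.exp (-(lam * ((T:ℂ) - ((y:ℝ):ℂ))))) =
      (fun y : ℝ => eMinus T ε y x) := by
    funext u; rw [eMinus, hlam]
  have hval : Complex.exp (-(lam * ((T:ℂ) - ((t:ℝ):ℂ)))) * -(lam * -1) =
      lam * eMinus T ε t x := by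
    rw [eMinus, hlam]; ring
  rw [hfn, hval, hlam] at h2
  exact h2

lemma fCat_hasDerivAt {T ε c : ℝ} (hε : 0 ≤ ε) {x t : ℝ}
    (hden : aPlus ε c x * ePlus T ε t x + aMinus ε c x * eMinus T ε t x ≠ 0) :
    HasDerivAt (fun t : ℝ => fCat T ε c t x)
      ((fCat T ε c t x)^2 - (ε : ℂ) * (rTheta x)^2) t := by
  set lam : ℂ := (Real.sqrt ε : ℂ) * rTheta x with hlam
  set A : ℂ := aPlus ε c x with hA
  set B : ℂ := aMinus ε c x with hB
  have hlam2 : lam^2 = (ε : ℂ) * (rTheta x)^2 := by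
    rw [hlam, mul_pow]
    congr 1
    rw [← Complex.ofReal_pow, Real.sq_sqrt hε]
  have hP := ePlus_hasDerivAt T ε x t
  have hM := eMinus_hasDerivAt T ε x t
  have hnum : HasDerivAt (fun t : ℝ => A * ePlus T ε t x - B * eMinus T ε t x)
      (A * (-lam * ePlus T ε t x) - B * (lam * eMinus T ε t x)) t :=
    (hP.const_mul A).sub (hM.const_mul B)
  have hden' : HasDerivAt (fun t : ℝ => A * ePlus T ε t x + B * eMinus T ε t x)
      (A * (-lam * ePlus T ε t x) + B * (lam * eMinus T ε t x)) t :=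
    (hP.const_mul A).add (hM.const_mul B)
  have hq := (hnum.div hden' hden).const_mul lam
  have hfun : (fun t : ℝ => fCat T ε c t x) = fun t : ℝ =>
      lam * ((A * ePlus T ε t x - B * eMinus T ε t x) /
        (A * ePlus T ε t x + B * eMinus T ε t x)) := by
    ext u; rw [fCat]
  rw [hfun]
  refine HasDerivAt.congr_deriv hq ?_
  have hfval : fCat T ε c t x =
      lam * ((A * ePlus T ε t x - B * eMinus T ε t x) /
        (A * ePlus T ε t x + B * eMinus T ε t x)) := by rw [fCat]
  rw [hfval, ← hlam2]
  set P : ℂ := ePlus T ε t x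
  set M : ℂ := eMinus T ε t x
  field_simp
  ring

lemma fCat_at_T {T ε c : ℝ} (hε : 0 < ε) (x : ℝ) :
    fCat T ε c T x = (c : ℂ) * (rTheta x)^2 := by
  have hsε : (0:ℝ) < Real.sqrt ε := Real.sqrt_pos.mpr hε
  have hne : ((Real.sqrt ε : ℝ) : ℂ) ≠ 0 := by exact_mod_cast hsε.ne'
  have h1 : ePlus T ε T x = 1 := by simp [ePlus]
  have h2 : eMinus T ε T x = 1 := by simp [eMinus]
  have hnum : aPlus ε c x - aMinus ε c x = 2 * c * rTheta x := by rw [aPlus, aMinus]; ring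
  have hden : aPlus ε c x + aMinus ε c x = 2 * (Real.sqrt ε : ℂ) := by rw [aPlus, aMinus]; ring
  rw [fCat, h1, h2, mul_one, mul_one, hnum, hden]
  have h2ε : (2 * ((Real.sqrt ε : ℝ) : ℂ)) ≠ 0 := by simpa using hne
  rw [mul_div_assoc', div_eq_iff h2ε]
  ring

/-- Uniqueness of solutions to the Riccati equation with terminal condition. -/
lemma riccati_unique {T : ℝ} (hT : 0 < T) (μ : ℂ) (F G : ℝ → ℂ)
    (hFc : ContinuousOn F (Set.Icc 0 T))
    (hF : ∀ t ∈ Set.Icc (0:ℝ) T, HasDerivWithinAt F ((F t)^2 - μ) (Set.Icc (0:ℝ) T) t)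
    (hGc : ContinuousOn G (Set.Icc 0 T))
    (hG : ∀ t ∈ Set.Icc (0:ℝ) T, HasDerivWithinAt G ((G t)^2 - μ) (Set.Icc (0:ℝ) T) t)
    (hend : F T = G T) :
    Set.EqOn F G (Set.Icc 0 T) := by
  obtain ⟨C1, hC1⟩ := (isCompact_Icc : IsCompact (Set.Icc (0:ℝ) T)).exists_bound_of_continuousOn hFc
  obtain ⟨C2, hC2⟩ := (isCompact_Icc : IsCompact (Set.Icc (0:ℝ) T)).exists_bound_of_continuousOn hGc
  set R : ℝ := max (max C1 C2) 1 with hR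
  have hR1 : (1:ℝ) ≤ R := le_max_right _ _
  have hR0 : (0:ℝ) ≤ R := by linarith
  have hFR : ∀ t ∈ Set.Icc (0:ℝ) T, F t ∈ Metric.closedBall (0:ℂ) R := fun t ht => by
    simp only [Metric.mem_closedBall, dist_zero_right]
    exact (hC1 t ht).trans (((le_max_left C1 C2).trans (le_max_left _ _)))
  have hGR : ∀ t ∈ Set.Icc (0:ℝ) T, G t ∈ Metric.closedBall (0:ℂ) R := fun t ht => by
    simp only [Metric.mem_closedBall, dist_zero_right]
    exact (hC2 t ht).trans (((le_max_right C1 C2).trans (le_max_left _ _)))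
  -- the vector field
  set v : ℝ → ℂ → ℂ := fun _ z => z^2 - μ with hv
  have hlip : ∀ s : ℝ, LipschitzOnWith (Real.toNNReal (2*R)) (v s) (Metric.closedBall (0:ℂ) R) := by
    intro s
    rw [lipschitzOnWith_iff_dist_le_mul]
    intro a ha b hb
    simp only [Metric.mem_closedBall, dist_zero_right] at ha hb
    simp only [hv, dist_eq_norm]
    have h1 : a^2 - μ - (b^2 - μ) = (a + b) * (a - b) := by ring
    rw [h1, norm_mul]
    have h2 : ‖a + b‖ ≤ 2 * R := by
      calc ‖a + b‖ ≤ ‖a‖ + ‖b‖ := norm_add_le a b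
        _ ≤ 2 * R := by linarith
    have h3 : (Real.toNNReal (2*R) : ℝ) = 2*R := Real.coe_toNNReal _ (by linarith)
    rw [h3]
    exact mul_le_mul_of_nonneg_right h2 (norm_nonneg _)
  -- derivative within Iic
  have hF' : ∀ s ∈ Set.Ioc (0:ℝ) T, HasDerivWithinAt F (v s (F s)) (Set.Iic s) s := by
    intro s hs
    have h1 : HasDerivWithinAt F ((F s)^2 - μ) (Set.Icc (0:ℝ) T) s :=
      hF s ⟨hs.1.le, hs.2⟩
    have h2 : Set.Icc (0:ℝ) T ∈ nhdsWithin s (Set.Iic s) := by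
      have : Set.Icc (0:ℝ) s ⊆ Set.Icc (0:ℝ) T := Set.Icc_subset_Icc_right hs.2
      refine Filter.mem_of_superset ?_ this
      rw [← Set.Iic_inter_Ici]
      exact Filter.inter_mem self_mem_nhdsWithin
        (mem_nhdsWithin_of_mem_nhds (Ici_mem_nhds hs.1))
    exact h1.mono_of_mem_nhdsWithin h2
  have hG' : ∀ s ∈ Set.Ioc (0:ℝ) T, HasDerivWithinAt G (v s (G s)) (Set.Iic s) s := by
    intro s hs
    have h1 : HasDerivWithinAt G ((G s)^2 - μ) (Set.Icc (0:ℝ) T) s :=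
      hG s ⟨hs.1.le, hs.2⟩
    have h2 : Set.Icc (0:ℝ) T ∈ nhdsWithin s (Set.Iic s) := by
      have : Set.Icc (0:ℝ) s ⊆ Set.Icc (0:ℝ) T := Set.Icc_subset_Icc_right hs.2
      refine Filter.mem_of_superset ?_ this
      rw [← Set.Iic_inter_Ici]
      exact Filter.inter_mem self_mem_nhdsWithin
        (mem_nhdsWithin_of_mem_nhds (Ici_mem_nhds hs.1))
    exact h1.mono_of_mem_nhdsWithin h2
  exact ODE_solution_unique_of_mem_Icc_left (fun s _ => hlip s) hFc hF'
    (fun s hs => hFR s ⟨hs.1.le, hs.2⟩) hGc hG'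
    (fun s hs => hGR s ⟨hs.1.le, hs.2⟩) hend

lemma eps_sum {ε : ℝ} {N : ℕ} (hN : 2 ≤ N) (W : ℤ → ℂ) (hW0 : W 0 = 1) :
    ∑ j ∈ Finset.range N, ((epsZ ε (j:ℤ) : ℝ) : ℂ) * W (j:ℤ) = (ε:ℂ) * (1 - W 1) := by
  rw [Finset.sum_eq_add_of_mem 0 1 (Finset.mem_range.mpr (by omega))
    (Finset.mem_range.mpr (by omega)) (by omega) ?_]
  · have h0 : epsZ ε ((0:ℕ):ℤ) = ε := by simp [epsZ]
    have h1 : epsZ ε ((1:ℕ):ℤ) = -ε := by simp [epsZ]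
    rw [h0, h1]
    push_cast
    rw [hW0]
    ring
  · intro i _ hne
    have hi2 : 2 ≤ i := by omega
    have hz : epsZ ε ((i:ℕ):ℤ) = 0 := by
      simp only [epsZ]
      rw [if_neg (by omega : ¬ ((i:ℤ) = 0)), if_neg (by omega : ¬ ((i:ℤ) = 1))]
    rw [hz]
    simp

lemma orth_sum {N : ℕ} (hN : 1 ≤ N) {j l : ℕ} (hj : j < N) (hl : l < N) :
    ∑ k ∈ Finset.range N,
      Complex.exp (-(2 * Real.pi * Complex.I * (l:ℂ) * (k:ℂ)) / (N:ℂ)) *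
        Complex.exp (2 * Real.pi * Complex.I * (j:ℂ) * (k:ℂ) / (N:ℂ))
      = if l = j then (N:ℂ) else 0 := by
  have hNC : ((N:ℕ):ℂ) ≠ 0 := Nat.cast_ne_zero.mpr (by omega)
  set ζ : ℂ := Complex.exp (2 * Real.pi * Complex.I * ((j:ℂ) - (l:ℂ)) / (N:ℂ)) with hζ
  have hterm : ∀ k : ℕ,
      Complex.exp (-(2 * Real.pi * Complex.I * (l:ℂ) * (k:ℂ)) / (N:ℂ)) *
        Complex.exp (2 * Real.pi * Complex.I * (j:ℂ) * (k:ℂ) / (N:ℂ)) = ζ ^ k := by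
    intro k
    rw [hζ, ← Complex.exp_nat_mul, ← Complex.exp_add]
    congr 1
    field_simp
    ring
  simp only [hterm]
  by_cases hlj : l = j
  · subst hlj
    have : ζ = 1 := by
      rw [hζ]
      simp
    simp [this]
  · rw [if_neg hlj]
    have hζN : ζ ^ N = 1 := by
      rw [hζ, ← Complex.exp_nat_mul]
      have harg : (N:ℂ) * (2 * Real.pi * Complex.I * ((j:ℂ) - (l:ℂ)) / (N:ℂ))
          = (((j:ℤ) - (l:ℤ) : ℤ) : ℂ) * (2 * Real.pi * Complex.I) := by
        push_cast
        field_simp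
      rw [harg, Complex.exp_int_mul_two_pi_mul_I]
    have hζ1 : ζ ≠ 1 := by
      intro h1
      rw [hζ, Complex.exp_eq_one_iff] at h1
      obtain ⟨n, hn⟩ := h1
      have hπ : (Real.pi : ℂ) ≠ 0 := Complex.ofReal_ne_zero.mpr Real.pi_ne_zero
      have hI : Complex.I ≠ 0 := Complex.I_ne_zero
      have hjl : ((j:ℂ) - (l:ℂ)) = (n:ℂ) * (N:ℂ) := by
        rw [div_eq_iff hNC] at hn
        have h2πI : (2:ℂ) * Real.pi * Complex.I ≠ 0 := by
          simp [hπ, hI]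
        apply mul_left_cancel₀ h2πI
        linear_combination hn
      have hjlZ : (j:ℤ) - (l:ℤ) = n * (N:ℤ) := by exact_mod_cast hjl
      have habs : |(j:ℤ) - (l:ℤ)| < (N:ℤ) := by
        rw [abs_lt]
        omega
      have hn0 : n ≠ 0 := by
        intro h0
        rw [h0, zero_mul] at hjlZ
        omega
      have : (N:ℤ) ≤ |(j:ℤ) - (l:ℤ)| := by
        rw [hjlZ, abs_mul, abs_of_nonneg (by positivity : (0:ℤ) ≤ (N:ℤ))]
        nlinarith [Int.one_le_abs hn0]
      omega
    rw [geom_sum_eq hζ1, hζN]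
    simp

lemma inversion_sum {N : ℕ} (hN : 1 ≤ N) (u : ℕ → ℂ) {j : ℕ} (hj : j < N) :
    (1 / (N:ℂ)) * ∑ k ∈ Finset.range N,
      (∑ l ∈ Finset.range N, u l *
          Complex.exp (-(2 * Real.pi * Complex.I * (l:ℂ) * (k:ℂ)) / (N:ℂ))) *
        Complex.exp (2 * Real.pi * Complex.I * (j:ℂ) * (k:ℂ) / (N:ℂ)) = u j := by
  have hNC : ((N:ℕ):ℂ) ≠ 0 := Nat.cast_ne_zero.mpr (by omega)
  have hswap : ∑ k ∈ Finset.range N,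
      (∑ l ∈ Finset.range N, u l *
          Complex.exp (-(2 * Real.pi * Complex.I * (l:ℂ) * (k:ℂ)) / (N:ℂ))) *
        Complex.exp (2 * Real.pi * Complex.I * (j:ℂ) * (k:ℂ) / (N:ℂ))
      = ∑ l ∈ Finset.range N, u l * ∑ k ∈ Finset.range N,
          Complex.exp (-(2 * Real.pi * Complex.I * (l:ℂ) * (k:ℂ)) / (N:ℂ)) *
            Complex.exp (2 * Real.pi * Complex.I * (j:ℂ) * (k:ℂ) / (N:ℂ)) := by
    calc ∑ k ∈ Finset.range N,
        (∑ l ∈ Finset.range N, u l *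
            Complex.exp (-(2 * Real.pi * Complex.I * (l:ℂ) * (k:ℂ)) / (N:ℂ))) *
          Complex.exp (2 * Real.pi * Complex.I * (j:ℂ) * (k:ℂ) / (N:ℂ))
        = ∑ k ∈ Finset.range N, ∑ l ∈ Finset.range N,
            u l * (Complex.exp (-(2 * Real.pi * Complex.I * (l:ℂ) * (k:ℂ)) / (N:ℂ)) *
              Complex.exp (2 * Real.pi * Complex.I * (j:ℂ) * (k:ℂ) / (N:ℂ))) := by
          refine Finset.sum_congr rfl fun k _ => ?_
          rw [Finset.sum_mul]
          exact Finset.sum_congr rfl fun l _ => by ring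
      _ = ∑ l ∈ Finset.range N, ∑ k ∈ Finset.range N,
            u l * (Complex.exp (-(2 * Real.pi * Complex.I * (l:ℂ) * (k:ℂ)) / (N:ℂ)) *
              Complex.exp (2 * Real.pi * Complex.I * (j:ℂ) * (k:ℂ) / (N:ℂ))) :=
          Finset.sum_comm
      _ = _ := by
          refine Finset.sum_congr rfl fun l _ => ?_
          rw [Finset.mul_sum]
  rw [hswap]
  have hsum : ∑ l ∈ Finset.range N, u l * ∑ k ∈ Finset.range N,
      Complex.exp (-(2 * Real.pi * Complex.I * (l:ℂ) * (k:ℂ)) / (N:ℂ)) *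
        Complex.exp (2 * Real.pi * Complex.I * (j:ℂ) * (k:ℂ) / (N:ℂ))
      = ∑ l ∈ Finset.range N, (if l = j then u l * (N:ℂ) else 0) := by
    refine Finset.sum_congr rfl fun l hl => ?_
    rw [orth_sum hN hj (Finset.mem_range.mp hl)]
    split_ifs with h
    · rfl
    · exact mul_zero _
  rw [hsum, Finset.sum_ite_eq' (Finset.range N) j (fun l => u l * (N:ℂ)),
    if_pos (Finset.mem_range.mpr hj)]
  field_simp

lemma hasDerivWithinAt_ofReal_comp {f : ℝ → ℝ} {u : ℝ} {s : Set ℝ} {x : ℝ}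
    (hf : HasDerivWithinAt f u s x) :
    HasDerivWithinAt (fun y => ((f y : ℝ) : ℂ)) ((u : ℝ) : ℂ) s x := by
  exact hf.ofReal_comp


/-- For a solution `φ_N` of the `N`-periodic Riccati system, the discrete Fourier transform
satisfies `\hatφ_N^k(t) = f_t(k/N)` for `k = 0,…,N-1`, `t ∈ [0,T]` (with `f_t(0) := 0`), and
consequently `φ_N^j(t) = (1/N) ∑_{k=0}^{N-1} f_t(k/N) exp(2π√(−1) jk/N)` for
`j = 0,…,N-1`. -/
theorem dft_eq_fCat_and_inversion
    (T ε c : ℝ) (hT : 0 < T) (hε : 0 < ε) (hc : 0 ≤ c)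
    (N : ℕ) (hN : 2 ≤ N) (φ : ℤ → ℝ → ℝ) (hφ : IsPerRiccatiSol T ε c N φ) :
    (∀ k : ℕ, k < N → ∀ t ∈ Set.Icc (0:ℝ) T,
      dft N φ k t = fCatExt T ε c t ((k : ℝ) / (N : ℝ))) ∧
    (∀ j : ℕ, j < N → ∀ t ∈ Set.Icc (0:ℝ) T,
      (φ (j : ℤ) t : ℂ) =
        (1 / (N : ℂ)) * ∑ k ∈ Finset.range N,
          fCatExt T ε c t ((k : ℝ) / (N : ℝ)) *
            Complex.exp (2 * Real.pi * Complex.I * (j : ℂ) * (k : ℂ) / (N : ℂ))) := by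
  obtain ⟨hper, hderiv, hφ0, hφ1, hφi⟩ := hφ
  have hNC : ((N:ℕ):ℂ) ≠ 0 := Nat.cast_ne_zero.mpr (by omega)
  have hNR : ((N:ℕ):ℝ) ≠ 0 := Nat.cast_ne_zero.mpr (by omega)
  have main : ∀ k : ℕ, k < N →
      Set.EqOn (dft N φ k) (fun t => fCatExt T ε c t ((k:ℝ)/(N:ℝ))) (Set.Icc 0 T) := by
    intro k hk
    set W : ℤ → ℂ :=
      fun m => Complex.exp (-(2 * Real.pi * Complex.I * ((m:ℤ):ℂ) * (k:ℂ)) / (N:ℂ)) with hW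
    have hWadd : ∀ a b : ℤ, W (a + b) = W a * W b := by
      intro a b
      rw [hW]
      simp only
      rw [← Complex.exp_add]
      congr 1
      push_cast
      ring
    have hW0 : W 0 = 1 := by simp [hW]
    have hWN : W (N:ℤ) = 1 := by
      rw [hW]
      simp only
      have harg : -(2 * Real.pi * Complex.I * (((N:ℤ):ℤ):ℂ) * (k:ℂ)) / (N:ℂ)
          = ((-(k:ℤ) : ℤ):ℂ) * (2 * Real.pi * Complex.I) := by
        push_cast
        field_simp
      rw [harg, Complex.exp_int_mul_two_pi_mul_I]
    set μ : ℂ := (ε:ℂ) * (1 - W 1) with hμ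
    have hdft_eq : ∀ s : ℝ, dft N φ k s =
        ∑ j ∈ Finset.range N, (φ (j:ℤ) s : ℂ) * W (j:ℤ) := by
      intro s
      simp only [dft, hW]
      refine Finset.sum_congr rfl fun j _ => ?_
      norm_cast
    have hdftfun : dft N φ k = fun s =>
        ∑ j ∈ Finset.range N, (φ (j:ℤ) s : ℂ) * W (j:ℤ) := funext hdft_eq
    -- derivative of the DFT
    have hdft_deriv : ∀ t ∈ Set.Icc (0:ℝ) T,
        HasDerivWithinAt (dft N φ k) ((dft N φ k t)^2 - μ) (Set.Icc (0:ℝ) T) t := by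
      intro t ht
      have hterm : ∀ j ∈ Finset.range N,
          HasDerivWithinAt (fun s => (φ (j:ℤ) s : ℂ) * W (j:ℤ))
            ((((∑ l ∈ Finset.range N, φ (l:ℤ) t * φ ((N:ℤ) + (j:ℤ) - (l:ℤ)) t)
                - epsZ ε (j:ℤ) : ℝ) : ℂ) * W (j:ℤ))
            (Set.Icc (0:ℝ) T) t := by
        intro j hj
        exact (hasDerivWithinAt_ofReal_comp
          (hderiv j (Finset.mem_range.mp hj) t ht)).mul_const (W (j:ℤ))
      have hsum := HasDerivWithinAt.fun_sum hterm
      have hval : ∑ j ∈ Finset.range N,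
          ((((∑ l ∈ Finset.range N, φ (l:ℤ) t * φ ((N:ℤ) + (j:ℤ) - (l:ℤ)) t)
              - epsZ ε (j:ℤ) : ℝ) : ℂ) * W (j:ℤ))
          = (∑ j ∈ Finset.range N, (φ (j:ℤ) t : ℂ) * W (j:ℤ))^2 - μ := by
        have hsplit : ∑ j ∈ Finset.range N,
            ((((∑ l ∈ Finset.range N, φ (l:ℤ) t * φ ((N:ℤ) + (j:ℤ) - (l:ℤ)) t)
                - epsZ ε (j:ℤ) : ℝ) : ℂ) * W (j:ℤ))
            = (∑ j ∈ Finset.range N,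
                (((∑ l ∈ Finset.range N, φ (l:ℤ) t * φ ((N:ℤ) + (j:ℤ) - (l:ℤ)) t : ℝ)) : ℂ)
                  * W (j:ℤ))
              - ∑ j ∈ Finset.range N, ((epsZ ε (j:ℤ) : ℝ) : ℂ) * W (j:ℤ) := by
          rw [← Finset.sum_sub_distrib]
          refine Finset.sum_congr rfl fun j _ => ?_
          push_cast
          ring
        rw [hsplit,
          conv_eq_sq N (fun m => φ m t) (fun i => congrFun (hper i) t) W hWadd hWN,
          eps_sum hN W hW0, hμ]
      rw [hdftfun]
      rw [← hval]
      exact hsum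
    -- continuity of the DFT
    have hφcont : ∀ j : ℕ, j < N → ContinuousOn (φ (j:ℤ)) (Set.Icc (0:ℝ) T) := by
      intro j hj t ht
      exact (hderiv j hj t ht).continuousWithinAt
    have hdftc : ContinuousOn (dft N φ k) (Set.Icc (0:ℝ) T) := by
      rw [hdftfun]
      refine continuousOn_finset_sum _ fun j hj => ?_
      exact (Complex.continuous_ofReal.comp_continuousOn
        (hφcont j (Finset.mem_range.mp hj))).mul continuousOn_const
    -- terminal value of the DFT
    have hdft_T : dft N φ k T = (c:ℂ) * (1 - W 1) := by
      rw [hdft_eq]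
      rw [Finset.sum_eq_add_of_mem 0 1 (Finset.mem_range.mpr (by omega))
        (Finset.mem_range.mpr (by omega)) (by omega) ?_]
      · have h0 : φ ((0:ℕ):ℤ) T = c := by exact_mod_cast hφ0
        have h1 : φ ((1:ℕ):ℤ) T = -c := by exact_mod_cast hφ1
        rw [h0, h1]
        have hW0' : W ((0:ℕ):ℤ) = 1 := by exact_mod_cast hW0
        rw [hW0']
        push_cast
        ring
      · intro i _ hne
        have : φ ((i:ℕ):ℤ) T = 0 := hφi i (by omega) (by
          rename_i hmem
          exact Finset.mem_range.mp hmem)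
        rw [this]
        simp
    by_cases hk0 : k = 0
    · -- k = 0 : both sides vanish
      subst hk0
      have hW1 : W 1 = 1 := by
        rw [hW]
        simp
      have hμ0 : μ = 0 := by rw [hμ, hW1]; ring
      have hgfun : (fun t : ℝ => fCatExt T ε c t (((0:ℕ):ℝ)/(N:ℝ))) = fun _ => (0:ℂ) := by
        funext s
        have : (((0:ℕ):ℝ)/(N:ℝ)) = 0 := by simp
        rw [this, fCatExt]
        simp
      rw [hgfun]
      refine riccati_unique hT μ _ _ hdftc hdft_deriv continuousOn_const ?_ ?_
      · intro t _
        simpa [hμ0] using hasDerivWithinAt_const t (Set.Icc (0:ℝ) T) (0:ℂ)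
      · rw [hdft_T, hW1]
        ring
    · -- 1 ≤ k
      set x : ℝ := (k:ℝ)/(N:ℝ) with hx
      have hxmem : x ∈ Set.Ioo (0:ℝ) 1 := by
        constructor
        · rw [hx]
          have : (0:ℝ) < (k:ℝ) := by exact_mod_cast Nat.pos_of_ne_zero hk0
          positivity
        · rw [hx, div_lt_one (by positivity : (0:ℝ) < (N:ℝ))]
          exact_mod_cast hk
      have hxne : ¬ (x = 0 ∨ x = 1) := by
        rintro (h | h)
        · rw [h] at hxmem; exact lt_irrefl _ hxmem.1
        · rw [h] at hxmem; exact lt_irrefl _ hxmem.2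
      have hgfun : (fun t : ℝ => fCatExt T ε c t ((k:ℝ)/(N:ℝ)))
          = fun t : ℝ => fCat T ε c t x := by
        funext s
        rw [← hx, fCatExt, if_neg hxne]
      have hrT : (rTheta x)^2 = 1 - W 1 := by
        have hargeq : -((2 * Real.pi * x : ℝ) : ℂ) * Complex.I
            = -(2 * Real.pi * Complex.I * (((1:ℤ)):ℂ) * (k:ℂ)) / (N:ℂ) := by
          rw [hx, eq_div_iff hNC]
          push_cast
          field_simp
        rw [rTheta_sq hxmem, hW]
        simp only
        rw [hargeq]
      have hdenom : ∀ t ∈ Set.Icc (0:ℝ) T,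
          aPlus ε c x * ePlus T ε t x + aMinus ε c x * eMinus T ε t x ≠ 0 :=
        fun t ht => denom_ne_zero hε hc hxmem ht.2
      have hg_deriv : ∀ t ∈ Set.Icc (0:ℝ) T,
          HasDerivWithinAt (fun t : ℝ => fCat T ε c t x)
            ((fCat T ε c t x)^2 - μ) (Set.Icc (0:ℝ) T) t := by
        intro t ht
        have h1 := (fCat_hasDerivAt hε.le (hdenom t ht)).hasDerivWithinAt
          (s := Set.Icc (0:ℝ) T)
        have h2 : (ε:ℂ) * (rTheta x)^2 = μ := by rw [hμ, hrT]
        rw [h2] at h1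
        exact h1
      have hgc : ContinuousOn (fun t : ℝ => fCat T ε c t x) (Set.Icc (0:ℝ) T) :=
        fun t ht => ((fCat_hasDerivAt hε.le (hdenom t ht)).continuousAt).continuousWithinAt
      have hend : dft N φ k T = fCat T ε c T x := by
        rw [hdft_T, fCat_at_T hε, hrT]
      rw [hgfun]
      exact riccati_unique hT μ _ _ hdftc hdft_deriv hgc hg_deriv hend
  constructor
  · intro k hk t ht
    exact main k hk ht
  · intro j hj t ht
    have hrw : ∀ k ∈ Finset.range N,
        fCatExt T ε c t ((k:ℝ)/(N:ℝ)) *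
            Complex.exp (2 * Real.pi * Complex.I * (j : ℂ) * (k : ℂ) / (N : ℂ))
          = (∑ l ∈ Finset.range N, (φ (l:ℤ) t : ℂ) *
              Complex.exp (-(2 * Real.pi * Complex.I * (l:ℂ) * (k:ℂ)) / (N:ℂ))) *
            Complex.exp (2 * Real.pi * Complex.I * (j : ℂ) * (k : ℂ) / (N : ℂ)) := by
      intro k hk
      have hmk : dft N φ k t = fCatExt T ε c t ((k:ℝ)/(N:ℝ)) :=
        main k (Finset.mem_range.mp hk) ht
      rw [← hmk]
      rfl
    rw [Finset.sum_congr rfl hrw]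
    exact (inversion_sum (by omega) (fun l => (φ (l:ℤ) t : ℂ)) hj).symm
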